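/- For every μ > 0 and ξ ∈ ℝ, ∫_ℝ e^{-μ cosh y} e^{i ξ sinh(x+y)} dy = ∫_0^∞ (1/v) exp(-1/(2v)) exp(-(μ² + ξ²) v / 2) e^{i μ ξ v sinh x} dv for all x ∈ ℝ. In particular, for μ, ξ > 0 the function (μ, ξ, x) ↦ ∫_ℝ e^{-μ cosh y} e^{i ξ sinh(x+y)} dy is symmetric in μ and ξ. -/

import Mathlib

open MeasureTheory Real Set Complex

noncomputable def Fi (p q : ℂ) : ℂ := ∫ t in Ioi (0:ℝ), Complex.exp (-(p*t) - q/t) / t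

lemma ubound1 {u : ℝ} (hu : 0 ≤ u) : u * Real.exp (-u) ≤ 1 := by
  rw [Real.exp_neg, mul_inv_le_iff₀ (Real.exp_pos u), one_mul]
  linarith [Real.add_one_le_exp u]

lemma ubound2 {u : ℝ} (hu : 0 ≤ u) : u^2 * Real.exp (-u) ≤ 4 := by
  have h := Real.add_one_le_exp (u/2)
  have h2 : u/2 ≤ Real.exp (u/2) := by linarith
  have h3 : (u/2)^2 ≤ Real.exp (u/2) ^ 2 := by
    apply pow_le_pow_left₀ (by linarith) h2
  rw [← Real.exp_nat_mul] at h3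
  rw [Real.exp_neg]
  rw [mul_inv_le_iff₀ (Real.exp_pos u)]
  have h4 : (2:ℕ) * (u/2) = u := by push_cast; ring
  rw [show ((2:ℕ):ℝ) * (u/2) = u by push_cast; ring] at h3
  nlinarith [Real.exp_pos u]

lemma norm_integrand {p q : ℂ} {t : ℝ} (ht : 0 < t) :
    ‖Complex.exp (-(p*t) - q/t) / t‖ = Real.exp (-(p.re*t) - q.re/t) / t := by
  rw [norm_div, Complex.norm_exp]
  congr 1
  · congr 1
    simp [Complex.sub_re, Complex.neg_re, Complex.mul_re, Complex.div_ofReal_re]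
  · simp [Complex.norm_real, abs_of_pos ht]

lemma cont_integrand (p q : ℂ) :
    ContinuousOn (fun t : ℝ => Complex.exp (-(p*t) - q/t) / t) (Ioi (0:ℝ)) := by
  apply ContinuousOn.div
  · apply Continuous.comp_continuousOn Complex.continuous_exp
    apply ContinuousOn.sub
    · exact (continuous_const.mul (Complex.continuous_ofReal)).neg.continuousOn
    · exact continuousOn_const.div (Complex.continuous_ofReal.continuousOn)
        (fun t ht => by exact_mod_cast ne_of_gt (mem_Ioi.mp ht))
  · exact Complex.continuous_ofReal.continuousOn
  · exact fun t ht => by exact_mod_cast ne_of_gt (mem_Ioi.mp ht)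

lemma Fi_integrable {p q : ℂ} (hp : 0 < p.re) (hq : 0 < q.re) :
    IntegrableOn (fun t : ℝ => Complex.exp (-(p*t) - q/t) / t) (Ioi (0:ℝ)) := by
  have hcont := cont_integrand p q
  refine Integrable.mono' ((exp_neg_integrableOn_Ioi 0 hp).const_mul (q.re)⁻¹)
    (hcont.aestronglyMeasurable measurableSet_Ioi) ?_
  filter_upwards [ae_restrict_mem measurableSet_Ioi] with t ht
  rw [norm_integrand ht]
  have h1 : Real.exp (-(q.re/t)) / t ≤ (q.re)⁻¹ := by
    rw [div_le_iff₀ (mem_Ioi.mp ht)]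
    have := ubound1 (u := q.re/t) (div_nonneg hq.le (le_of_lt (mem_Ioi.mp ht)))
    have ht0 := mem_Ioi.mp ht
    rw [div_mul_eq_mul_div, div_le_one ht0] at this
    rw [inv_mul_eq_div, le_div_iff₀ hq]
    linarith
  rw [show -(p.re*t) - q.re/t = -(p.re*t) + -(q.re/t) from by ring, Real.exp_add,
    mul_div_assoc, neg_mul, mul_comm (q.re⁻¹)]
  exact mul_le_mul_of_nonneg_left h1 (Real.exp_pos _).le

lemma Fi_symm (p q : ℂ) : Fi p q = Fi q p := by
  have himg : (fun x : ℝ => x⁻¹) '' Ioi 0 = Ioi 0 := by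
    ext x; simp only [mem_image, mem_Ioi]
    constructor
    · rintro ⟨y, hy, rfl⟩; exact inv_pos.mpr hy
    · intro hx; exact ⟨x⁻¹, inv_pos.mpr hx, inv_inv x⟩
  have hder : ∀ x ∈ Ioi (0:ℝ), HasDerivWithinAt (fun x : ℝ => x⁻¹) (-(x^2)⁻¹) (Ioi 0) x :=
    fun x hx => (hasDerivAt_inv (ne_of_gt (mem_Ioi.mp hx))).hasDerivWithinAt
  have hinj : InjOn (fun x : ℝ => x⁻¹) (Ioi 0) := fun a _ b _ h => inv_injective h
  have := MeasureTheory.integral_image_eq_integral_abs_deriv_smul measurableSet_Ioi hder hinj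
    (fun t : ℝ => Complex.exp (-(p*t) - q/t) / t)
  rw [himg] at this
  rw [Fi, this, Fi]
  refine setIntegral_congr_fun measurableSet_Ioi (fun x hx => ?_)
  have hx0 : (0:ℝ) < x := mem_Ioi.mp hx
  have hxne : (x:ℂ) ≠ 0 := by exact_mod_cast ne_of_gt hx0
  rw [abs_neg, abs_inv, abs_of_pos (by positivity : (0:ℝ) < x^2)]
  push_cast
  rw [real_smul]
  push_cast
  field_simp
  ring_nf

lemma Fi_scale (p q : ℂ) {c : ℝ} (hc : 0 < c) : Fi p q = Fi (c * p) (q / c) := by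
  have h := integral_comp_mul_left_Ioi
    (fun t : ℝ => Complex.exp (-(p*t) - q/t) / t) 0 hc
  rw [mul_zero] at h
  have h2 : ∫ x in Ioi (0:ℝ), (fun t : ℝ => Complex.exp (-(p*t) - q/t) / t) (c*x)
      = c⁻¹ • Fi (c*p) (q/c) := by
    rw [Fi, ← integral_smul]
    refine setIntegral_congr_fun measurableSet_Ioi (fun x hx => ?_)
    have hx0 : (0:ℝ) < x := mem_Ioi.mp hx
    have hxne : (x:ℂ) ≠ 0 := by exact_mod_cast ne_of_gt hx0
    have hcne : (c:ℂ) ≠ 0 := by exact_mod_cast ne_of_gt hc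
    simp only
    rw [real_smul]
    push_cast
    have harg : -(p * (↑c * ↑x)) - q / (↑c * ↑x) = -(↑c * p * ↑x) - q / ↑c / ↑x := by
      field_simp
    rw [harg]
    field_simp
  rw [h2] at h
  have hcne : (c:ℝ)⁻¹ ≠ 0 := inv_ne_zero (ne_of_gt hc)
  have := smul_right_injective ℂ hcne h
  exact this.symm

lemma norm_integrand' {p q : ℂ} {t : ℝ} (ht : 0 < t) :
    ‖Complex.exp (-(p*t) - q/t) * (-(↑t)⁻¹) / t‖
      = Real.exp (-(p.re*t) - q.re/t) / t / t := by
  rw [norm_div, norm_mul, norm_neg, norm_inv, Complex.norm_exp]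
  have h1 : (-(p*(t:ℂ)) - q/t).re = -(p.re*t) - q.re/t := by
    simp [Complex.sub_re, Complex.neg_re, Complex.mul_re, Complex.div_ofReal_re]
  rw [h1]
  simp [Complex.norm_real, abs_of_pos ht]
  field_simp

lemma Fi_diff_snd {p : ℂ} (hp : 0 < p.re) {q0 : ℂ} (hq0 : 0 < q0.re) :
    DifferentiableAt ℂ (fun q => Fi p q) q0 := by
  set ε : ℝ := q0.re / 2 with hε
  have hε0 : 0 < ε := by positivity
  have key := hasDerivAt_integral_of_dominated_loc_of_deriv_le (μ := volume.restrict (Ioi (0:ℝ)))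
    (F := fun (q : ℂ) (t : ℝ) => Complex.exp (-(p*t) - q/t) / t)
    (F' := fun (q : ℂ) (t : ℝ) => Complex.exp (-(p*t) - q/t) * (-(↑t)⁻¹) / t)
    (x₀ := q0) (bound := fun t => (4/ε^2) * Real.exp (-(p.re * t)))
    (Metric.ball_mem_nhds q0 hε0) ?_ ?_ ?_ ?_ ?_ ?_
  · exact key.2.differentiableAt
  · exact Filter.Eventually.of_forall (fun q =>
      ((cont_integrand p q).aestronglyMeasurable measurableSet_Ioi))
  · exact Fi_integrable hp hq0
  · apply ContinuousOn.aestronglyMeasurable ?_ measurableSet_Ioi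
    apply ContinuousOn.div ?_ Complex.continuous_ofReal.continuousOn
      (fun t ht => by exact_mod_cast ne_of_gt (mem_Ioi.mp ht))
    apply ContinuousOn.mul
    · apply Continuous.comp_continuousOn Complex.continuous_exp
      apply ContinuousOn.sub
      · exact (continuous_const.mul Complex.continuous_ofReal).neg.continuousOn
      · exact continuousOn_const.div Complex.continuous_ofReal.continuousOn
          (fun t ht => by exact_mod_cast ne_of_gt (mem_Ioi.mp ht))
    · exact ((Complex.continuous_ofReal.continuousOn).inv₀
        (fun t ht => by exact_mod_cast ne_of_gt (mem_Ioi.mp ht))).neg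
  · filter_upwards [ae_restrict_mem measurableSet_Ioi] with t ht
    intro q hqball
    have ht0 : (0:ℝ) < t := mem_Ioi.mp ht
    rw [norm_integrand' ht0]
    have hqre : ε ≤ q.re := by
      have h1 : |(q - q0).re| ≤ ‖q - q0‖ := Complex.abs_re_le_norm _
      have h2 : ‖q - q0‖ < ε := by
        rw [Metric.mem_ball, Complex.dist_eq] at hqball; exact hqball
      have h3 : |q.re - q0.re| < ε := by rw [Complex.sub_re] at h1; linarith
      have h4 := abs_lt.mp h3
      simp only [hε] at *
      linarith [h4.1]
    have e1 : Real.exp (-(p.re*t) - q.re/t)/t/t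
        = Real.exp (-(p.re*t)) * (Real.exp (-(q.re/t))/t^2) := by
      rw [show -(p.re*t) - q.re/t = -(p.re*t) + -(q.re/t) from by ring, Real.exp_add]
      field_simp
    rw [e1]
    have e2 : Real.exp (-(q.re/t)) ≤ Real.exp (-(ε/t)) := by
      apply Real.exp_le_exp.mpr
      have : ε/t ≤ q.re/t := by gcongr
      linarith
    have e3 : Real.exp (-(ε/t))/t^2 ≤ 4/ε^2 := by
      have h := ubound2 (u := ε/t) (by positivity)
      rw [div_pow, div_mul_eq_mul_div, div_le_iff₀ (by positivity)] at h
      rw [div_le_div_iff₀ (by positivity) (by positivity)]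
      nlinarith
    rw [mul_comm (4/ε^2)]
    apply mul_le_mul_of_nonneg_left ?_ (Real.exp_pos _).le
    calc Real.exp (-(q.re/t))/t^2 ≤ Real.exp (-(ε/t))/t^2 := by gcongr
    _ ≤ 4/ε^2 := e3
  · exact (Integrable.const_mul (by simpa [neg_mul, IntegrableOn] using exp_neg_integrableOn_Ioi 0 hp) _)
  · filter_upwards [ae_restrict_mem measurableSet_Ioi] with t ht
    intro q hqball
    have ht0 : (0:ℝ) < t := mem_Ioi.mp ht
    have htne : (t:ℂ) ≠ 0 := by exact_mod_cast ne_of_gt ht0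
    have h1 : HasDerivAt (fun q : ℂ => -(p*↑t) - q/↑t) (-(↑t)⁻¹) q := by
      simpa [one_div] using ((hasDerivAt_id q).div_const (↑t : ℂ)).const_sub (-(p*↑t))
    exact (h1.cexp).div_const (↑t : ℂ)

lemma Fi_key {p q : ℂ} (hp : 0 < p.re) (hq : 0 < q.re) (hpq : 0 < (p*q).re) :
    Fi p q = Fi (2*p*q) (1/2) := by
  set Ω : Set ℂ := {z : ℂ | 0 < z.re} ∩ {z : ℂ | 0 < (p*z).re} with hΩ
  have hΩo : IsOpen Ω := by
    apply IsOpen.inter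
    · exact isOpen_lt continuous_const Complex.continuous_re
    · exact isOpen_lt continuous_const (Complex.continuous_re.comp (continuous_const.mul continuous_id))
  have hconv : Convex ℝ Ω := by
    apply Convex.inter (convex_halfSpace_re_gt 0)
    have : {z : ℂ | 0 < (p*z).re} = (fun z => p * z) ⁻¹' {z : ℂ | 0 < z.re} := rfl
    rw [this]
    exact (convex_halfSpace_re_gt 0).linear_preimage (LinearMap.mulLeft ℂ p |>.restrictScalars ℝ)
  have hhalf : (0:ℝ) < ((1:ℂ)/2).re := by norm_num
  have hfd : DifferentiableOn ℂ (fun z => Fi p z) Ω :=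
    fun z hz => (Fi_diff_snd hp hz.1).differentiableWithinAt
  have hf : AnalyticOnNhd ℂ (fun z => Fi p z) Ω := hfd.analyticOnNhd hΩo
  have hre2 : ∀ z : ℂ, ((2:ℂ)*p*z).re = 2 * (p*z).re := by
    intro z; rw [mul_assoc]
    simp [Complex.mul_re]
  have hg : AnalyticOnNhd ℂ (fun z => Fi (1/2) (2*p*z)) Ω := by
    apply DifferentiableOn.analyticOnNhd ?_ hΩo
    intro z hz
    have h2pz : 0 < ((2:ℂ)*p*z).re := by rw [hre2]; have h : 0 < (p*z).re := hz.2; linarith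
    exact ((Fi_diff_snd hhalf h2pz).comp z
      ((differentiable_id.const_mul (2*p)).differentiableAt)).differentiableWithinAt
  have h1mem : (1:ℂ) ∈ Ω := by
    constructor
    · simp
    · simpa using hp
  have htt : Filter.Tendsto (fun r : ℝ => (r:ℂ)) (nhdsWithin (1:ℝ) {(1:ℝ)}ᶜ)
      (nhdsWithin (1:ℂ) {(1:ℂ)}ᶜ) := by
    apply tendsto_nhdsWithin_of_tendsto_nhds_of_eventually_within
    · exact (Complex.continuous_ofReal.tendsto 1).mono_left nhdsWithin_le_nhds
    · filter_upwards [self_mem_nhdsWithin] with r hr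
      simp only [mem_compl_iff, mem_singleton_iff] at hr ⊢
      exact_mod_cast hr
  have hev : ∀ᶠ r in nhdsWithin (1:ℝ) {(1:ℝ)}ᶜ,
      Fi p ((r:ℝ):ℂ) = Fi (1/2) (2*p*((r:ℝ):ℂ)) := by
    filter_upwards [eventually_nhdsWithin_of_eventually_nhds
      (eventually_gt_nhds (by norm_num : (0:ℝ) < 1))] with r hr
    have hrne : (r:ℂ) ≠ 0 := by exact_mod_cast ne_of_gt hr
    have := Fi_scale p ((r:ℝ):ℂ) (c := 2*r) (by positivity)
    rw [this, Fi_symm]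
    congr 1
    · push_cast
      rw [div_eq_div_iff (by exact mul_ne_zero two_ne_zero hrne) two_ne_zero]
      ring
    · push_cast; ring
  have hfreq : ∃ᶠ z in nhdsWithin (1:ℂ) {(1:ℂ)}ᶜ, Fi p z = Fi (1/2) (2*p*z) :=
    htt.frequently hev.frequently
  have heq := hf.eqOn_of_preconnected_of_frequently_eq hg hconv.isPreconnected h1mem hfreq
  have hqmem : q ∈ Ω := ⟨hq, hpq⟩
  calc Fi p q = Fi (1/2) (2*p*q) := heq hqmem
  _ = Fi (2*p*q) (1/2) := Fi_symm _ _

lemma Fi_eq_integral_exp (p q : ℂ) :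
    Fi p q = ∫ y : ℝ, Complex.exp (-(p * Real.exp y) - q * Real.exp (-y)) := by
  have himg : Real.exp '' univ = Ioi 0 := by rw [image_univ, Real.range_exp]
  have h := integral_image_eq_integral_abs_deriv_smul (s := univ) MeasurableSet.univ
    (f' := Real.exp) (fun y _ => (Real.hasDerivAt_exp y).hasDerivWithinAt)
    (Real.exp_injective.injOn) (fun t : ℝ => Complex.exp (-(p*t) - q/t) / t)
  rw [himg] at h
  rw [Fi, h, Measure.restrict_univ]
  congr 1; funext y
  have he : (0:ℝ) < Real.exp y := Real.exp_pos y
  have hene : ((Real.exp y : ℝ) : ℂ) ≠ 0 := by exact_mod_cast ne_of_gt he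
  rw [abs_of_pos he, real_smul]
  push_cast [Real.exp_neg]
  field_simp

lemma main1 (μ ξ : ℝ) (hμ : 0 < μ) (x : ℝ) :
    (∫ y : ℝ, Complex.exp (-((μ * Real.cosh y : ℝ) : ℂ)) *
        Complex.exp (Complex.I * ((ξ * Real.sinh (x + y) : ℝ) : ℂ)))
      = ∫ v in Ioi (0:ℝ),
          (1 / (v : ℂ)) * Complex.exp (-((1 / (2 * v) : ℝ) : ℂ)) *
            Complex.exp (-(((μ ^ 2 + ξ ^ 2) * v / 2 : ℝ) : ℂ)) *
            Complex.exp (Complex.I * ((μ * ξ * v * Real.sinh x : ℝ) : ℂ)) := by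
  set p : ℂ := ↑(μ/2) + ↑(-(ξ * Real.exp x)/2) * Complex.I with hp
  set q : ℂ := ↑(μ/2) + ↑((ξ * Real.exp (-x))/2) * Complex.I with hq
  have hpre : p.re = μ/2 := by
    simp only [hp, Complex.add_re, Complex.mul_re, Complex.ofReal_re, Complex.ofReal_im,
      Complex.I_re, Complex.I_im]
    ring
  have hqre : q.re = μ/2 := by
    simp only [hq, Complex.add_re, Complex.mul_re, Complex.ofReal_re, Complex.ofReal_im,
      Complex.I_re, Complex.I_im]
    ring
  have hpq : 2*(p*q) = (((μ^2+ξ^2)/2 : ℝ) : ℂ) + ((-(μ*ξ*Real.sinh x) : ℝ) : ℂ) * Complex.I := by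
    apply Complex.ext <;>
    · simp only [hp, hq, Complex.add_re, Complex.add_im, Complex.mul_re, Complex.mul_im,
        Complex.ofReal_re, Complex.ofReal_im, Complex.I_re, Complex.I_im,
        Complex.re_ofNat, Complex.im_ofNat]
      rw [Real.sinh_eq, Real.exp_neg]
      field_simp
      ring
  have hpqre : 0 < (p*q).re := by
    have h : (2*(p*q)).re = (μ^2+ξ^2)/2 := by
      rw [hpq]
      simp only [Complex.add_re, Complex.mul_re, Complex.ofReal_re, Complex.ofReal_im,
        Complex.I_re, Complex.I_im]
      ring
    have h2 : (2*(p*q)).re = 2*(p*q).re := by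
      simp only [Complex.mul_re, Complex.re_ofNat, Complex.im_ofNat]
      ring
    rw [h2] at h
    nlinarith [pow_pos hμ 2, sq_nonneg ξ]
  have hL : (∫ y : ℝ, Complex.exp (-((μ * Real.cosh y : ℝ) : ℂ)) *
      Complex.exp (Complex.I * ((ξ * Real.sinh (x + y) : ℝ) : ℂ))) = Fi p q := by
    rw [Fi_eq_integral_exp p q]
    congr 1; funext y
    rw [← Complex.exp_add]
    congr 1
    have h1 : Complex.exp (y:ℂ) ≠ 0 := Complex.exp_ne_zero _
    have h2 : Complex.exp (x:ℂ) ≠ 0 := Complex.exp_ne_zero _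
    rw [hp, hq]
    rw [Real.cosh_eq, Real.sinh_eq, show -(x+y) = -x + -y from by ring, Real.exp_add,
      Real.exp_add]
    push_cast
    ring
  have hR : (∫ v in Ioi (0:ℝ),
      (1 / (v : ℂ)) * Complex.exp (-((1 / (2 * v) : ℝ) : ℂ)) *
        Complex.exp (-(((μ ^ 2 + ξ ^ 2) * v / 2 : ℝ) : ℂ)) *
        Complex.exp (Complex.I * ((μ * ξ * v * Real.sinh x : ℝ) : ℂ)))
      = Fi (2*(p*q)) (1/2) := by
    rw [Fi]
    refine setIntegral_congr_fun measurableSet_Ioi (fun v hv => ?_)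
    have hv0 : (0:ℝ) < v := mem_Ioi.mp hv
    have hvne : ((v:ℝ):ℂ) ≠ 0 := by exact_mod_cast ne_of_gt hv0
    have e1 : ∀ a b c : ℂ, 1/(v:ℂ) * Complex.exp a * Complex.exp b * Complex.exp c
        = Complex.exp (a+b+c) / v := by
      intro a b c
      rw [Complex.exp_add, Complex.exp_add]
      ring
    rw [e1]
    rw [hpq]
    congr 1
    push_cast
    field_simp
    ring
  have hM : Fi p q = Fi (2*(p*q)) (1/2) := by
    rw [← mul_assoc]
    exact Fi_key (by rw [hpre]; positivity) (by rw [hqre]; positivity) hpqre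
  rw [hL, hM, ← hR]

theorem stmt_2 (μ ξ : ℝ) (hμ : 0 < μ) :
    (∀ x : ℝ,
      ∫ y : ℝ,
          Complex.exp (-((μ * Real.cosh y : ℝ) : ℂ)) *
            Complex.exp (Complex.I * ((ξ * Real.sinh (x + y) : ℝ) : ℂ))
        = ∫ v in Ioi (0:ℝ),
            (1 / (v : ℂ)) * Complex.exp (-((1 / (2 * v) : ℝ) : ℂ)) *
              Complex.exp (-(((μ ^ 2 + ξ ^ 2) * v / 2 : ℝ) : ℂ)) *
              Complex.exp (Complex.I * ((μ * ξ * v * Real.sinh x : ℝ) : ℂ)))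
    ∧ (0 < ξ → ∀ x : ℝ,
      ∫ y : ℝ,
          Complex.exp (-((μ * Real.cosh y : ℝ) : ℂ)) *
            Complex.exp (Complex.I * ((ξ * Real.sinh (x + y) : ℝ) : ℂ))
        = ∫ y : ℝ,
          Complex.exp (-((ξ * Real.cosh y : ℝ) : ℂ)) *
            Complex.exp (Complex.I * ((μ * Real.sinh (x + y) : ℝ) : ℂ))) := by
  constructor
  · exact main1 μ ξ hμ
  · intro hξ x
    rw [main1 μ ξ hμ x, main1 ξ μ hξ x]
    refine setIntegral_congr_fun measurableSet_Ioi (fun v hv => ?_)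
    have e1 : (ξ^2 + μ^2) * v / 2 = (μ^2 + ξ^2) * v / 2 := by ring
    have e2 : ξ*μ*v*Real.sinh x = μ*ξ*v*Real.sinh x := by ring
    rw [e1, e2]
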